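/- Let p be a prime and let R be a ℤ_p-algebra that is p-adically separated and on which multiplication by p is injective. If μ₁ and μ₂ are ℤ_p-linear maps C(ℤ_p × ℤ_p, ℤ_p) → R such that μ₁((x,y) ↦ x^k·y^r) = μ₂((x,y) ↦ x^k·y^r) for all natural numbers k and r, then μ₁ = μ₂. In other words, an R-valued measure on ℤ_p × ℤ_p is characterized by its two-variable moments. -/

import Mathlib

open ContinuousMap Polynomial Filter Finset IsUltrametricDist PadicInt
open scoped fwdDiff

namespace TwoVarMomentsAux

variable {p : ℕ} [Fact p.Prime]

/-- The binomial-product continuous function `(x, y) ↦ C(x,k) * C(y,r)`. -/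
noncomputable def B (k r : ℕ) : C(ℤ_[p] × ℤ_[p], ℤ_[p]) :=
  ⟨fun z => Ring.choose z.1 k * Ring.choose z.2 r,
    (((PadicInt.continuous_choose k).comp continuous_fst).mul
      ((PadicInt.continuous_choose r).comp continuous_snd))⟩

lemma B_apply (k r : ℕ) (z : ℤ_[p] × ℤ_[p]) :
    B k r z = Ring.choose z.1 k * Ring.choose z.2 r := rfl

lemma monomial_apply (k r : ℕ) (z : ℤ_[p] × ℤ_[p]) :
    ((ContinuousMap.fst : C(ℤ_[p] × ℤ_[p], ℤ_[p])) ^ k *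
        (ContinuousMap.snd : C(ℤ_[p] × ℤ_[p], ℤ_[p])) ^ r) z = z.1 ^ k * z.2 ^ r := by
  simp

/-- A factorial multiple of the binomial product lies in the span of the monomials. -/
lemma nsmul_B_mem (k r : ℕ) :
    ((k.factorial * r.factorial : ℕ) : ℤ_[p]) • B k r ∈
      Submodule.span ℤ_[p]
        {g | ∃ k r : ℕ, g = (ContinuousMap.fst : C(ℤ_[p] × ℤ_[p], ℤ_[p])) ^ k *
            (ContinuousMap.snd : C(ℤ_[p] × ℤ_[p], ℤ_[p])) ^ r} := by
  classical
  set P := descPochhammer ℤ k with hP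
  set Q := descPochhammer ℤ r with hQ
  have key : ((k.factorial * r.factorial : ℕ) : ℤ_[p]) • B k r =
      ∑ i ∈ Finset.range (P.natDegree + 1), ∑ j ∈ Finset.range (Q.natDegree + 1),
        (((P.coeff i : ℤ_[p])) * ((Q.coeff j : ℤ_[p]))) •
          ((ContinuousMap.fst : C(ℤ_[p] × ℤ_[p], ℤ_[p])) ^ i *
            (ContinuousMap.snd : C(ℤ_[p] × ℤ_[p], ℤ_[p])) ^ j) := by
    ext z
    have h1 : (P.smeval z.1) = k.factorial • Ring.choose z.1 k :=
      Ring.descPochhammer_eq_factorial_smul_choose z.1 k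
    have h2 : (Q.smeval z.2) = r.factorial • Ring.choose z.2 r :=
      Ring.descPochhammer_eq_factorial_smul_choose z.2 r
    have e1 : P.smeval z.1
        = ∑ i ∈ Finset.range (P.natDegree + 1), (P.coeff i : ℤ_[p]) * z.1 ^ i := by
      rw [← Polynomial.aeval_eq_smeval, Polynomial.aeval_eq_sum_range]
      exact Finset.sum_congr rfl fun i _ => (zsmul_eq_mul _ _).trans (by ring)
    have e2 : Q.smeval z.2
        = ∑ j ∈ Finset.range (Q.natDegree + 1), (Q.coeff j : ℤ_[p]) * z.2 ^ j := by
      rw [← Polynomial.aeval_eq_smeval, Polynomial.aeval_eq_sum_range]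
      exact Finset.sum_congr rfl fun j _ => (zsmul_eq_mul _ _).trans (by ring)
    have lhs : (((k.factorial * r.factorial : ℕ) : ℤ_[p]) • B k r) z =
        (P.smeval z.1) * (Q.smeval z.2) := by
      rw [h1, h2, ContinuousMap.smul_apply, B_apply, smul_eq_mul, nsmul_eq_mul, nsmul_eq_mul]
      push_cast
      ring
    rw [lhs, e1, e2, Finset.sum_mul_sum]
    rw [ContinuousMap.sum_apply]
    refine Finset.sum_congr rfl fun i _ => ?_
    rw [ContinuousMap.sum_apply]
    refine Finset.sum_congr rfl fun j _ => ?_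
    rw [ContinuousMap.smul_apply, monomial_apply, smul_eq_mul]
    ring
  rw [key]
  exact Submodule.sum_mem _ fun i _ => Submodule.sum_mem _ fun j _ =>
    Submodule.smul_mem _ _ (Submodule.subset_span ⟨i, j, rfl⟩)

/-- In a `ℤ_p`-algebra where multiplication by `p` is injective, multiplication by any
nonzero natural number is injective. -/
lemma cancel_natCast {R : Type*} [CommRing R] [Algebra ℤ_[p] R]
    (hp : Function.Injective fun r : R => (p : R) * r) :
    ∀ t : ℕ, t ≠ 0 → ∀ x : R, (t : R) * x = 0 → x = 0 := by
  intro t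
  induction t using Nat.strong_induction_on with
  | _ t IH =>
    intro ht x hx
    by_cases hdvd : p ∣ t
    · obtain ⟨s, rfl⟩ := hdvd
      have hs : s ≠ 0 := by rintro rfl; simp at ht
      have hplt : 1 < p := (Fact.out : p.Prime).one_lt
      have hslt : s < p * s := by
        have := Nat.pos_of_ne_zero hs
        calc s = 1 * s := (one_mul s).symm
        _ < p * s := by exact Nat.mul_lt_mul_of_lt_of_le hplt le_rfl this
      refine IH s hslt hs x ?_
      apply hp
      show (p : R) * ((s : R) * x) = (p : R) * 0
      rw [mul_zero, ← mul_assoc, ← Nat.cast_mul]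
      exact hx
    · have hnorm : ‖((t : ℤ) : ℤ_[p])‖ = 1 := by
        rcases lt_or_eq_of_le (PadicInt.norm_le_one ((t : ℤ) : ℤ_[p])) with hlt | heq
        · exact absurd (Int.natCast_dvd_natCast.mp
            ((PadicInt.norm_int_lt_one_iff_dvd t).mp hlt)) hdvd
        · exact heq
      have hu : IsUnit ((t : ℕ) : ℤ_[p]) := by
        rw [show ((t : ℕ) : ℤ_[p]) = ((t : ℤ) : ℤ_[p]) by push_cast; ring]
        exact PadicInt.isUnit_iff.mpr hnorm
      have hmap : ((t : ℕ) : R) = algebraMap ℤ_[p] R ((t : ℕ) : ℤ_[p]) := by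
        rw [map_natCast]
      rw [hmap] at hx
      exact ((hu.map (algebraMap ℤ_[p] R)).mul_right_eq_zero).mp hx

/-- A linear map vanishing on all monomials vanishes on their span. -/
lemma vanish_on_span {R : Type*} [CommRing R] [Algebra ℤ_[p] R]
    (ν : C(ℤ_[p] × ℤ_[p], ℤ_[p]) →ₗ[ℤ_[p]] R)
    (hν : ∀ k r : ℕ,
      ν ((ContinuousMap.fst : C(ℤ_[p] × ℤ_[p], ℤ_[p])) ^ k *
          (ContinuousMap.snd : C(ℤ_[p] × ℤ_[p], ℤ_[p])) ^ r) = 0)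
    {f : C(ℤ_[p] × ℤ_[p], ℤ_[p])}
    (hf : f ∈ Submodule.span ℤ_[p]
      {g | ∃ k r : ℕ, g = (ContinuousMap.fst : C(ℤ_[p] × ℤ_[p], ℤ_[p])) ^ k *
          (ContinuousMap.snd : C(ℤ_[p] × ℤ_[p], ℤ_[p])) ^ r}) :
    ν f = 0 := by
  induction hf using Submodule.span_induction with
  | mem x hx => obtain ⟨k, r, rfl⟩ := hx; exact hν k r
  | zero => simp
  | add x y hx hy ihx ihy => rw [map_add, ihx, ihy, add_zero]
  | smul a x hx ih => rw [map_smul, ih, smul_zero]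

instance : IsBoundedSMul ℤ_[p] ℚ_[p] :=
  IsBoundedSMul.of_norm_smul_le fun r x => by
    rw [Algebra.smul_def, norm_mul, PadicInt.norm_def]; rfl

/-- Approximation of a continuous function by a `ℤ_p`-combination of binomial products,
up to `p^n` times a continuous function.  This is a consequence of Mahler's theorem, applied
twice (once in each variable, via currying). -/
lemma approx (f : C(ℤ_[p] × ℤ_[p], ℤ_[p])) (n : ℕ) :
    ∃ (K R₀ : ℕ) (c : ℕ → ℕ → ℤ_[p]) (h : C(ℤ_[p] × ℤ_[p], ℤ_[p])),
      f = (∑ k ∈ Finset.range K, ∑ r ∈ Finset.range R₀, c k r • B k r)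
          + ((p : ℤ_[p]) ^ n) • h := by
  classical
  set ε : ℝ := (p : ℝ) ^ (-(n : ℤ)) with hε_def
  have hppos : (0 : ℝ) < (p : ℝ) := by exact_mod_cast (Fact.out : p.Prime).pos
  have hε : 0 < ε := zpow_pos hppos _
  -- the function as a `ℚ_p`-valued function, curried
  let f' : C(ℤ_[p] × ℤ_[p], ℚ_[p]) :=
    ⟨fun z => ((f z : ℚ_[p])), continuous_subtype_val.comp f.continuous⟩
  let F : C(ℤ_[p], C(ℤ_[p], ℚ_[p])) := f'.curry
  have hF1 : ‖F‖ ≤ 1 := by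
    refine (ContinuousMap.norm_le _ zero_le_one).mpr fun x => ?_
    refine (ContinuousMap.norm_le _ zero_le_one).mpr fun y => ?_
    have hxy : (F x) y = ((f (x, y) : ℚ_[p])) := rfl
    rw [hxy, ← PadicInt.norm_def]
    exact PadicInt.norm_le_one _
  let a : ℕ → C(ℤ_[p], ℚ_[p]) := fun k => (Δ_[(1 : ℤ_[p])])^[k] (⇑F) 0
  have ha_norm : ∀ k, ‖a k‖ ≤ 1 :=
    fun k => le_trans (IsUltrametricDist.norm_fwdDiff_iter_apply_le 1 F 0 k) hF1
  let c' : ℕ → ℕ → ℚ_[p] := fun k r => (Δ_[(1 : ℤ_[p])])^[r] (⇑(a k)) 0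
  have hc_norm : ∀ k r, ‖c' k r‖ ≤ 1 := fun k r =>
    le_trans (IsUltrametricDist.norm_fwdDiff_iter_apply_le 1 (a k) 0 r) (ha_norm k)
  -- truncation in the first variable
  obtain ⟨K, hK⟩ : ∃ K, ‖F - ∑ k ∈ Finset.range K, mahlerTerm (a k) k‖ ≤ ε := by
    have ht := (hasSum_mahler F).tendsto_sum_nat
    rw [Metric.tendsto_atTop] at ht
    obtain ⟨K, hK⟩ := ht ε hε
    refine ⟨K, ?_⟩
    have := hK K le_rfl
    rw [dist_eq_norm'] at this
    exact this.le
  -- truncation in the second variable, for each k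
  have ha : ∀ k, ∃ N, ∀ m ≥ N,
      ‖a k - ∑ r ∈ Finset.range m, mahlerTerm (c' k r) r‖ ≤ ε := by
    intro k
    have ht := (hasSum_mahler (a k)).tendsto_sum_nat
    rw [Metric.tendsto_atTop] at ht
    obtain ⟨N, hN⟩ := ht ε hε
    exact ⟨N, fun m hm => by have := hN m hm; rw [dist_eq_norm'] at this; exact this.le⟩
  choose N hN using ha
  set R₀ : ℕ := (Finset.range K).sup N with hR₀
  set b : ℕ → C(ℤ_[p], ℚ_[p]) := fun k => ∑ r ∈ Finset.range R₀, mahlerTerm (c' k r) r with hb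
  have hab : ∀ k < K, ‖a k - b k‖ ≤ ε := fun k hk =>
    hN k R₀ (Finset.le_sup (Finset.mem_range.mpr hk))
  -- the approximating element
  set c : ℕ → ℕ → ℤ_[p] := fun k r => ⟨c' k r, hc_norm k r⟩ with hc
  set g : C(ℤ_[p] × ℤ_[p], ℤ_[p]) :=
    ∑ k ∈ Finset.range K, ∑ r ∈ Finset.range R₀, c k r • B k r with hg
  -- pointwise estimate
  have hpt : ∀ z : ℤ_[p] × ℤ_[p], ‖f z - g z‖ ≤ ε := by
    intro z
    rw [PadicInt.norm_def, PadicInt.coe_sub]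
    have hgz : ((g z : ℚ_[p])) = ∑ k ∈ Finset.range K, mahler k z.1 * (b k) z.2 := by
      rw [hg]
      rw [ContinuousMap.sum_apply]
      rw [show ∀ w : ℤ_[p], (w : ℚ_[p]) = PadicInt.Coe.ringHom w from fun _ => rfl]
      rw [map_sum]
      refine Finset.sum_congr rfl fun k _ => ?_
      rw [ContinuousMap.sum_apply, map_sum]
      rw [hb, ContinuousMap.sum_apply, Finset.mul_sum]
      refine Finset.sum_congr rfl fun r _ => ?_
      rw [mahlerTerm_apply, Algebra.smul_def, mahler_apply]
      show ((c k r • B k r) z : ℚ_[p]) = _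
      rw [ContinuousMap.smul_apply, smul_eq_mul, B_apply]
      push_cast
      show (c' k r) * (_ * _) = _
      rw [mahler_apply, Algebra.smul_def]
      show _ = _ * (((Ring.choose z.2 r : ℤ_[p]) : ℚ_[p]) * _)
      ring
    set SK : C(ℤ_[p], C(ℤ_[p], ℚ_[p])) := ∑ k ∈ Finset.range K, mahlerTerm (a k) k with hSK
    have hSKz : (SK z.1) z.2 = ∑ k ∈ Finset.range K, mahler k z.1 * (a k) z.2 := by
      rw [hSK, ContinuousMap.sum_apply, ContinuousMap.sum_apply]
      refine Finset.sum_congr rfl fun k _ => ?_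
      rw [mahlerTerm_apply, ContinuousMap.smul_apply, Algebra.smul_def]
      rfl
    have hfz : (f z : ℚ_[p]) = (F z.1) z.2 := by
      simp [F, f', ContinuousMap.curry_apply]
    have split : (f z : ℚ_[p]) - (g z : ℚ_[p]) =
        ((F z.1) z.2 - (SK z.1) z.2) +
          ∑ k ∈ Finset.range K, mahler k z.1 * ((a k) z.2 - (b k) z.2) := by
      rw [hfz, hgz, hSKz]
      simp only [mul_sub, Finset.sum_sub_distrib]
      ring
    rw [split]
    refine le_trans (IsUltrametricDist.norm_add_le_max _ _) (max_le ?_ ?_)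
    · have h1 : (F z.1) z.2 - (SK z.1) z.2 = ((F - SK) z.1) z.2 := by
        rw [ContinuousMap.sub_apply, ContinuousMap.sub_apply]
      rw [h1]
      exact le_trans (ContinuousMap.norm_coe_le_norm _ z.2)
        (le_trans (ContinuousMap.norm_coe_le_norm _ z.1) hK)
    · refine IsUltrametricDist.norm_sum_le_of_forall_le_of_nonneg hε.le fun k hk => ?_
      rw [_root_.norm_mul]
      have hm1 : ‖mahler k z.1‖ ≤ 1 := by
        rw [mahler_apply]
        exact PadicInt.norm_le_one _
      have hm2 : ‖(a k) z.2 - (b k) z.2‖ ≤ ε := by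
        have h2 : (a k) z.2 - (b k) z.2 = ((a k - b k) : C(ℤ_[p], ℚ_[p])) z.2 := by
          rw [ContinuousMap.sub_apply]
        rw [h2]
        exact le_trans (ContinuousMap.norm_coe_le_norm _ z.2)
          (hab k (Finset.mem_range.mp hk))
      calc ‖mahler k z.1‖ * ‖(a k) z.2 - (b k) z.2‖ ≤ 1 * ε :=
            mul_le_mul hm1 hm2 (norm_nonneg _) zero_le_one
      _ = ε := one_mul ε
  -- build `h` by dividing by `p^n`
  have hpn0 : ((p : ℚ_[p]) ^ n) ≠ 0 := by
    exact pow_ne_zero _ (by exact_mod_cast (Fact.out : p.Prime).ne_zero)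
  have hbound : ∀ z : ℤ_[p] × ℤ_[p],
      ‖(((f z - g z : ℤ_[p]) : ℚ_[p])) / (p : ℚ_[p]) ^ n‖ ≤ 1 := by
    intro z
    rw [norm_div, _root_.norm_pow, Padic.norm_p, ← PadicInt.norm_def]
    rw [inv_pow, div_eq_mul_inv, inv_inv]
    calc ‖f z - g z‖ * (p : ℝ) ^ n ≤ ε * (p : ℝ) ^ n :=
          mul_le_mul_of_nonneg_right (hpt z) (by positivity)
    _ = 1 := by
        rw [hε_def, ← zpow_natCast ((p : ℝ)) n, ← zpow_add₀ hppos.ne']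
        simp
  let h : C(ℤ_[p] × ℤ_[p], ℤ_[p]) :=
    ⟨fun z => ⟨(((f z - g z : ℤ_[p]) : ℚ_[p])) / (p : ℚ_[p]) ^ n, hbound z⟩, by
      apply Continuous.subtype_mk
      exact ((continuous_subtype_val.comp f.continuous).sub
        (continuous_subtype_val.comp g.continuous)).div_const _⟩
  refine ⟨K, R₀, c, h, ?_⟩
  ext z
  apply Subtype.ext
  push_cast [ContinuousMap.add_apply, ContinuousMap.smul_apply]
  show (f z : ℚ_[p]) = (g z : ℚ_[p]) + (p : ℚ_[p]) ^ n *
    ((((f z - g z : ℤ_[p]) : ℚ_[p])) / (p : ℚ_[p]) ^ n)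
  rw [mul_div_cancel₀ _ hpn0]
  push_cast
  ring

end TwoVarMomentsAux

/-- Let `p` be a prime and `R` a `ℤ_p`-algebra that is
`p`-adically separated and on which multiplication by `p` is injective.  If two
`ℤ_p`-linear maps `μ₁, μ₂ : C(ℤ_p × ℤ_p, ℤ_p) → R` agree on all monomials
`(x, y) ↦ x^k * y^r`, then `μ₁ = μ₂`: an `R`-valued measure on `ℤ_p × ℤ_p` is
characterized by its two-variable moments. -/
theorem two_variable_measure_characterized_by_moments
    (p : ℕ) [Fact p.Prime]
    (R : Type*) [CommRing R] [Algebra ℤ_[p] R]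
    [IsHausdorff (Ideal.span {(p : R)}) R]
    (hp : Function.Injective fun r : R => (p : R) * r)
    (μ₁ μ₂ : C(ℤ_[p] × ℤ_[p], ℤ_[p]) →ₗ[ℤ_[p]] R)
    (h : ∀ k r : ℕ,
      μ₁ ((ContinuousMap.fst : C(ℤ_[p] × ℤ_[p], ℤ_[p])) ^ k *
          (ContinuousMap.snd : C(ℤ_[p] × ℤ_[p], ℤ_[p])) ^ r) =
      μ₂ ((ContinuousMap.fst : C(ℤ_[p] × ℤ_[p], ℤ_[p])) ^ k *
          (ContinuousMap.snd : C(ℤ_[p] × ℤ_[p], ℤ_[p])) ^ r)) :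
    μ₁ = μ₂ := by
  classical
  set ν : C(ℤ_[p] × ℤ_[p], ℤ_[p]) →ₗ[ℤ_[p]] R := μ₁ - μ₂ with hν_def
  have hνmono : ∀ k r : ℕ,
      ν ((ContinuousMap.fst : C(ℤ_[p] × ℤ_[p], ℤ_[p])) ^ k *
          (ContinuousMap.snd : C(ℤ_[p] × ℤ_[p], ℤ_[p])) ^ r) = 0 := by
    intro k r
    rw [hν_def, LinearMap.sub_apply, sub_eq_zero]
    exact h k r
  -- ν vanishes on each binomial product
  have hνB : ∀ k r : ℕ, ν (TwoVarMomentsAux.B k r) = 0 := by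
    intro k r
    have h0 : ν (((k.factorial * r.factorial : ℕ) : ℤ_[p]) • TwoVarMomentsAux.B k r) = 0 :=
      TwoVarMomentsAux.vanish_on_span ν hνmono (TwoVarMomentsAux.nsmul_B_mem k r)
    rw [map_smul, Algebra.smul_def, map_natCast] at h0
    exact TwoVarMomentsAux.cancel_natCast hp _
      (Nat.mul_ne_zero k.factorial_ne_zero r.factorial_ne_zero) _ h0
  -- ν f lies in every power of the ideal (p)
  have hmem : ∀ (f : C(ℤ_[p] × ℤ_[p], ℤ_[p])) (n : ℕ),
      ν f ∈ (Ideal.span {(p : R)} ^ n • ⊤ : Submodule R R) := by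
    intro f n
    obtain ⟨K, R₀, c, hh, heq⟩ := TwoVarMomentsAux.approx f n
    have hg0 : ν (∑ k ∈ Finset.range K, ∑ r ∈ Finset.range R₀,
        c k r • TwoVarMomentsAux.B k r) = 0 := by
      rw [map_sum]
      refine Finset.sum_eq_zero fun k _ => ?_
      rw [map_sum]
      refine Finset.sum_eq_zero fun r _ => ?_
      rw [map_smul, hνB, smul_zero]
    have hνf : ν f = (p : R) ^ n * ν hh := by
      rw [heq, map_add, hg0, zero_add, map_smul, Algebra.smul_def, map_pow, map_natCast]
    rw [hνf]
    have htop : (Ideal.span {(p : R)} ^ n • ⊤ : Submodule R R)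
        = Ideal.span {(p : R)} ^ n := by
      rw [smul_eq_mul, Ideal.mul_top]
    rw [htop]
    exact Ideal.mul_mem_right _ _
      (Ideal.pow_mem_pow (Ideal.subset_span (Set.mem_singleton _)) n)
  have hν0 : ∀ f, ν f = 0 := fun f =>
    IsHausdorff.haus ‹IsHausdorff (Ideal.span {(p : R)}) R› (ν f)
      (fun n => SModEq.zero.mpr (hmem f n))
  ext f
  have := hν0 f
  rw [hν_def, LinearMap.sub_apply, sub_eq_zero] at this
  exact this
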